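/- For every integer n ≥ 1, S_n(α) = α + o(α²) as α → 0⁺; more precisely, 0 ≤ (α − S_n(α))/α² ≤ (α − sin α)/α² for α ∈ (0, π], and hence (α − S_n(α))/α² → 0 as α → 0⁺. -/

import Mathlib

open Real Filter

noncomputable def Sn (n : ℕ) (d : ℝ) : ℝ :=
  ((n : ℝ) * ∫ s in (0:ℝ)..d, Real.sin s ^ (n - 1)) ^ ((1 : ℝ) / n)

lemma sin_ge_linear {α s : ℝ} (h1 : 0 < α) (h2 : α ≤ Real.pi) (hs : s ∈ Set.Icc 0 α) :
    s / α * Real.sin α ≤ Real.sin s := by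
  have hc := strictConcaveOn_sin_Icc.concaveOn
  have h0 : (0:ℝ) ∈ Set.Icc 0 Real.pi := ⟨le_refl _, Real.pi_pos.le⟩
  have hα : α ∈ Set.Icc 0 Real.pi := ⟨h1.le, h2⟩
  have hb : 0 ≤ s / α := div_nonneg hs.1 h1.le
  have ha : 0 ≤ 1 - s / α := by
    have : s / α ≤ 1 := (div_le_one h1).2 hs.2
    linarith
  have h := hc.2 h0 hα ha hb (by ring)
  have hx : (1 - s / α) • (0:ℝ) + (s / α) • α = s := by
    field_simp
    simp only [smul_eq_mul, mul_zero, zero_add]; exact div_mul_cancel₀ s h1.ne'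
  rw [hx] at h
  simpa [smul_eq_mul] using h

lemma Sn_bounds (n : ℕ) (hn : 1 ≤ n) {α : ℝ} (h1 : 0 < α) (h2 : α ≤ Real.pi) :
    Real.sin α ≤ Sn n α ∧ Sn n α ≤ α := by
  have hsin_nonneg : 0 ≤ Real.sin α := Real.sin_nonneg_of_nonneg_of_le_pi h1.le h2
  have hcont : Continuous fun s : ℝ => Real.sin s ^ (n - 1) := by continuity
  have hint : IntervalIntegrable (fun s : ℝ => Real.sin s ^ (n - 1)) MeasureTheory.volume 0 α :=
    hcont.intervalIntegrable 0 α
  have hint2 : IntervalIntegrable (fun s : ℝ => s ^ (n - 1)) MeasureTheory.volume 0 α :=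
    (continuous_pow _).intervalIntegrable 0 α
  have hint3 : IntervalIntegrable (fun s : ℝ => (Real.sin α / α) ^ (n - 1) * s ^ (n - 1))
      MeasureTheory.volume 0 α := (hint2.const_mul _)
  have hpow : ∫ s in (0:ℝ)..α, s ^ (n - 1) = α ^ n / n := by
    have hd : ((n - 1 : ℕ) : ℝ) + 1 = n := by
      rw [Nat.cast_sub hn]; push_cast; ring
    rw [integral_pow, Nat.sub_add_cancel hn, zero_pow (Nat.one_le_iff_ne_zero.mp hn), hd]
    ring
  -- upper bound on integral
  have hup : (n : ℝ) * ∫ s in (0:ℝ)..α, Real.sin s ^ (n - 1) ≤ α ^ n := by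
    have hmono : ∫ s in (0:ℝ)..α, Real.sin s ^ (n - 1) ≤ ∫ s in (0:ℝ)..α, s ^ (n - 1) := by
      apply intervalIntegral.integral_mono_on h1.le hint hint2
      intro s hs
      exact pow_le_pow_left₀ (Real.sin_nonneg_of_nonneg_of_le_pi hs.1 (hs.2.trans h2))
        (Real.sin_le hs.1) _
    rw [hpow] at hmono
    have hn0 : (0:ℝ) < n := by exact_mod_cast hn
    calc (n : ℝ) * ∫ s in (0:ℝ)..α, Real.sin s ^ (n - 1) ≤ (n:ℝ) * (α ^ n / n) := by
          exact mul_le_mul_of_nonneg_left hmono hn0.le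
      _ = α ^ n := by field_simp
  -- lower bound on integral
  have hlo : Real.sin α ^ n ≤ (n : ℝ) * ∫ s in (0:ℝ)..α, Real.sin s ^ (n - 1) := by
    have hmono : ∫ s in (0:ℝ)..α, (Real.sin α / α) ^ (n - 1) * s ^ (n - 1)
        ≤ ∫ s in (0:ℝ)..α, Real.sin s ^ (n - 1) := by
      apply intervalIntegral.integral_mono_on h1.le hint3 hint
      intro s hs
      have h := sin_ge_linear h1 h2 hs
      have hnn : 0 ≤ s / α * Real.sin α := by
        have := div_nonneg hs.1 h1.le
        positivity
      calc (Real.sin α / α) ^ (n - 1) * s ^ (n - 1) = (s / α * Real.sin α) ^ (n - 1) := by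
            rw [← mul_pow]; ring_nf
        _ ≤ Real.sin s ^ (n - 1) := pow_le_pow_left₀ hnn h _
    rw [intervalIntegral.integral_const_mul, hpow] at hmono
    have hn0 : (0:ℝ) < n := by exact_mod_cast hn
    have heq : (Real.sin α / α) ^ (n - 1) * (α ^ n / n) = α * Real.sin α ^ (n - 1) / n := by
      rw [div_pow]
      have hαn : α ^ n = α ^ (n - 1) * α := by
        conv_lhs => rw [← Nat.sub_add_cancel hn]
        rw [pow_succ]
      rw [hαn]
      field_simp
    rw [heq] at hmono
    have : Real.sin α ^ n ≤ α * Real.sin α ^ (n - 1) := by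
      have hαn : Real.sin α ^ n = Real.sin α * Real.sin α ^ (n - 1) := by
        conv_lhs => rw [← Nat.sub_add_cancel hn]
        rw [pow_succ]; ring
      rw [hαn]
      exact mul_le_mul_of_nonneg_right (Real.sin_le h1.le) (by positivity)
    calc Real.sin α ^ n ≤ α * Real.sin α ^ (n - 1) := this
      _ = (n:ℝ) * (α * Real.sin α ^ (n - 1) / n) := by field_simp
      _ ≤ (n:ℝ) * ∫ s in (0:ℝ)..α, Real.sin s ^ (n - 1) :=
          mul_le_mul_of_nonneg_left hmono hn0.le
  have hn0 : n ≠ 0 := Nat.one_le_iff_ne_zero.mp hn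
  have hsinpow : (0:ℝ) ≤ Real.sin α ^ n := by positivity
  constructor
  · have : (Real.sin α ^ n) ^ ((1:ℝ)/n) ≤ Sn n α := by
      unfold Sn
      exact Real.rpow_le_rpow hsinpow hlo (by positivity)
    rwa [one_div, Real.pow_rpow_inv_natCast hsin_nonneg hn0] at this
  · have : Sn n α ≤ (α ^ n) ^ ((1:ℝ)/n) := by
      unfold Sn
      exact Real.rpow_le_rpow (hsinpow.trans hlo) hup (by positivity)
    rwa [one_div, Real.pow_rpow_inv_natCast h1.le hn0] at this

theorem stmt_1 (n : ℕ) (hn : 1 ≤ n) :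
    (∀ α ∈ Set.Ioc (0:ℝ) Real.pi,
      0 ≤ (α - Sn n α) / α ^ 2 ∧ (α - Sn n α) / α ^ 2 ≤ (α - Real.sin α) / α ^ 2) ∧
    Tendsto (fun α : ℝ => (α - Sn n α) / α ^ 2) (nhdsWithin 0 (Set.Ioi 0)) (nhds 0) := by
  have hmain : ∀ α ∈ Set.Ioc (0:ℝ) Real.pi,
      0 ≤ (α - Sn n α) / α ^ 2 ∧ (α - Sn n α) / α ^ 2 ≤ (α - Real.sin α) / α ^ 2 := by
    intro α hα
    obtain ⟨h1, h2⟩ := hα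
    obtain ⟨hlo, hup⟩ := Sn_bounds n hn h1 h2
    constructor
    · apply div_nonneg (by linarith) (by positivity)
    · gcongr
  refine ⟨hmain, ?_⟩
  have hc : (0:ℝ) < min 1 Real.pi := lt_min one_pos Real.pi_pos
  have hmem : Set.Ioo (0:ℝ) (min 1 Real.pi) ∈ nhdsWithin (0:ℝ) (Set.Ioi 0) :=
    Ioo_mem_nhdsGT_of_mem ⟨le_refl 0, hc⟩
  apply squeeze_zero' (g := fun α : ℝ => α / 4)
  · filter_upwards [hmem] with α hα
    exact (hmain α ⟨hα.1, (hα.2.le.trans (min_le_right _ _))⟩).1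
  · filter_upwards [hmem] with α hα
    obtain ⟨h1, h2⟩ := hα
    have h2' : α ≤ Real.pi := h2.le.trans (min_le_right _ _)
    have h1' : α ≤ 1 := h2.le.trans (min_le_left _ _)
    have hcube := Real.sin_gt_sub_cube h1
    have hb : (α - Real.sin α) / α ^ 2 ≤ α / 4 := by
      rw [div_le_div_iff₀ (by positivity) (by norm_num)]
      nlinarith [sq_nonneg α]
    exact ((hmain α ⟨h1, h2'⟩).2).trans hb
  · have : Tendsto (fun α : ℝ => α / 4) (nhds 0) (nhds 0) := by
      have := (continuous_id.div_const (4:ℝ)).tendsto 0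
      simpa using this
    exact this.mono_left nhdsWithin_le_nhds
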